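/- Let k ≠ 0 be a real constant and W a one-dimensional Brownian motion. The FBSDE dX_t = (k + Z_t) dW_t, X_0 = x, dY_t = Z_t dW_t, Y_T = X_T, admits no solution (X,Y,Z) of adapted square-integrable processes: any solution would satisfy Y_t = X_t + k(W_T − W_t) for all t, in particular Y_0 − x = k W_T, which contradicts the 𝓕_0-measurability of Y_0 since W_T is a nondegenerate Gaussian random variable. -/

import Mathlib

open MeasureTheory ProbabilityTheory Filter Set
open scoped ENNReal NNReal

noncomputable section

/-- Vectors in `ℝ^k`. -/
abbrev Vec (k : ℕ) := Fin k → ℝ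
/-- `m × k` real matrices. -/
abbrev Mat (m k : ℕ) := Fin m → Fin k → ℝ
/-- Paths with values in `ℝ^d`. -/
abbrev PathD (d : ℕ) := ℝ → Vec d

/-- Euclidean inner product. -/
def vdot {k : ℕ} (v w : Vec k) : ℝ := ∑ i, v i * w i
/-- Euclidean norm. -/
def vnorm {k : ℕ} (v : Vec k) : ℝ := Real.sqrt (vdot v v)
/-- Frobenius inner product of matrices. -/
def mdot {m k : ℕ} (A B : Mat m k) : ℝ := ∑ i, ∑ j, A i j * B i j
/-- Frobenius norm of a matrix. -/
def mnorm {m k : ℕ} (A : Mat m k) : ℝ := Real.sqrt (mdot A A)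
/-- Matrix-vector multiplication. -/
def mvMul {m k : ℕ} (A : Mat m k) (v : Vec k) : Vec m := fun i => ∑ j, A i j * v j
/-- Matrix-matrix multiplication. -/
def matMul {m k l : ℕ} (A : Mat m k) (B : Mat k l) : Mat m l := fun i j => ∑ p, A i p * B p j
/-- Transpose. -/
def transp {m k : ℕ} (A : Mat m k) : Mat k m := fun i j => A j i

/-- The squared path norm `‖x‖_{2,t}² = ∫₀ᵗ |x(s)|² ds + |x(t)|²`. -/
def pathNormSq {d : ℕ} (x : PathD d) (t : ℝ) : ℝ :=
  (∫ s in Set.Ioc (0:ℝ) t, (vnorm (x s))^2) + (vnorm (x t))^2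

/-- The path norm `‖x‖_{2,t}`. -/
def pathNorm {d : ℕ} (x : PathD d) (t : ℝ) : ℝ := Real.sqrt (pathNormSq x t)

/-- `W` is an `n`-dimensional Brownian motion w.r.t. the filtration `𝓕` under `P`. -/
structure IsBrownianMotion {Ω : Type} [mΩ : MeasurableSpace Ω] (P : Measure Ω)
    (𝓕 : Filtration ℝ mΩ) {n : ℕ} (W : ℝ → Ω → Vec n) : Prop where
  zero : ∀ ω, W 0 ω = 0
  adapted : Adapted 𝓕 W
  cont : ∀ ω, Continuous fun t => W t ω
  indep_past : ∀ s t : ℝ, 0 ≤ s → s ≤ t →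
    Indep (MeasurableSpace.comap (fun ω => W t ω - W s ω) inferInstance) (𝓕 s) P
  gauss_law : ∀ s t : ℝ, 0 ≤ s → s ≤ t → ∀ i : Fin n,
    P.map (fun ω => W t ω i - W s ω i) = gaussianReal 0 ((t - s).toNNReal)
  coord_indep : ∀ s t : ℝ, 0 ≤ s → s ≤ t →
    iIndepFun (fun i ω => W t ω i - W s ω i) P

/-- An abstract Itô stochastic integral operator w.r.t. the Brownian motion `W`,
with its characteristic properties (vanishing at `0`, continuous adapted paths,
integral of constants, a.s. additivity and the martingale property for progressively
measurable square-integrable integrands). -/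
structure ItoIntegral {Ω : Type} [mΩ : MeasurableSpace Ω] (P : Measure Ω)
    (𝓕 : Filtration ℝ mΩ) (n : ℕ) (W : ℝ → Ω → Vec n) where
  integ : {m : ℕ} → (ℝ → Ω → Mat m n) → ℝ → Ω → Vec m
  integ_zero : ∀ {m : ℕ} (H : ℝ → Ω → Mat m n), integ H 0 = 0
  integ_cont : ∀ {m : ℕ} (H : ℝ → Ω → Mat m n) (ω : Ω), Continuous fun t => integ H t ω
  integ_adapted : ∀ {m : ℕ} (H : ℝ → Ω → Mat m n), Adapted 𝓕 (integ H)
  integ_const : ∀ {m : ℕ} (C : Mat m n) (t : ℝ), 0 ≤ t → ∀ ω,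
    integ (fun _ _ => C) t ω = mvMul C (W t ω)
  integ_add : ∀ {m : ℕ} (H₁ H₂ : ℝ → Ω → Mat m n),
    ProgMeasurable 𝓕 H₁ → ProgMeasurable 𝓕 H₂ →
    (∀ T : ℝ, 0 ≤ T →
      ∫⁻ ω, ENNReal.ofReal (∫ s in Set.Ioc (0:ℝ) T, (mnorm (H₁ s ω))^2) ∂P < ⊤) →
    (∀ T : ℝ, 0 ≤ T →
      ∫⁻ ω, ENNReal.ofReal (∫ s in Set.Ioc (0:ℝ) T, (mnorm (H₂ s ω))^2) ∂P < ⊤) →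
    ∀ t : ℝ, 0 ≤ t → ∀ᵐ ω ∂P,
      integ (fun s ω' => H₁ s ω' + H₂ s ω') t ω = integ H₁ t ω + integ H₂ t ω
  integ_martingale : ∀ {m : ℕ} (H : ℝ → Ω → Mat m n), ProgMeasurable 𝓕 H →
    (∀ T : ℝ, 0 ≤ T →
      ∫⁻ ω, ENNReal.ofReal (∫ s in Set.Ioc (0:ℝ) T, (mnorm (H s ω))^2) ∂P < ⊤) →
    Martingale (fun t => integ H t) 𝓕 P

variable {Ω : Type} [mΩ : MeasurableSpace Ω]

/-- `(X,Y,Z)` is a solution of the path-dependent FBSDE with coefficients `(b,σ,f)` on `[t₁,t₂]`,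
with initial path process `ι` (i.e. `X = ι` on `(-∞,t₁]`) and terminal condition
`Y_{t₂} = ξ(X)`, where the stochastic integrals are taken w.r.t. the Itô integral `I`. -/
structure IsSolution (P : Measure Ω) (𝓕 : Filtration ℝ mΩ) {n d : ℕ} {W : ℝ → Ω → Vec n}
    (I : ItoIntegral P 𝓕 n W)
    (b : ℝ → Ω → PathD d → Vec n → Mat n n → Vec d)
    (σ : ℝ → Ω → PathD d → Vec n → Mat n n → Mat d n)
    (f : ℝ → Ω → PathD d → Vec n → Mat n n → Vec n)
    (t₁ t₂ : ℝ)
    (ι : ℝ → Ω → Vec d) (ξ : Ω → PathD d → Vec n)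
    (X : ℝ → Ω → Vec d) (Y : ℝ → Ω → Vec n) (Z : ℝ → Ω → Mat n n) : Prop where
  X_adapted : Adapted 𝓕 X
  Y_adapted : Adapted 𝓕 Y
  Z_prog : ProgMeasurable 𝓕 Z
  X_cont : ∀ ω, Continuous fun t => X t ω
  Y_cont : ∀ ω, Continuous fun t => Y t ω
  X_sq : ∫⁻ ω, ENNReal.ofReal (∫ s in Set.Ioc (0:ℝ) t₂, (vnorm (X s ω))^2) ∂P < ⊤
  Y_sq : ∀ t ∈ Set.Icc t₁ t₂, ∫⁻ ω, ENNReal.ofReal ((vnorm (Y t ω))^2) ∂P < ⊤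
  Z_sq : ∫⁻ ω, ENNReal.ofReal (∫ s in Set.Ioc t₁ t₂, (mnorm (Z s ω))^2) ∂P < ⊤
  init : ∀ᵐ ω ∂P, ∀ s ≤ t₁, X s ω = ι s ω
  forward : ∀ᵐ ω ∂P, ∀ t ∈ Set.Icc t₁ t₂,
    X t ω = ι t₁ ω + (∫ s in Set.Ioc t₁ t, b s ω (fun r => X r ω) (Y s ω) (Z s ω))
      + (I.integ (fun s ω' => σ s ω' (fun r => X r ω') (Y s ω') (Z s ω')) t ω
         - I.integ (fun s ω' => σ s ω' (fun r => X r ω') (Y s ω') (Z s ω')) t₁ ω)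
  backward : ∀ᵐ ω ∂P, ∀ t ∈ Set.Icc t₁ t₂,
    Y t ω = ξ ω (fun r => X r ω) + (∫ s in Set.Ioc t t₂, f s ω (fun r => X r ω) (Y s ω) (Z s ω))
      - (I.integ Z t₂ ω - I.integ Z t ω)

/-- Two solutions coincide: `X`, `Y` are indistinguishable on `[t₁,t₂]` and `Z = Z'`
`dt⊗P`-almost everywhere on `[t₁,t₂]`. -/
def SolEquiv (P : Measure Ω) {n d : ℕ} (t₁ t₂ : ℝ)
    (X : ℝ → Ω → Vec d) (Y : ℝ → Ω → Vec n) (Z : ℝ → Ω → Mat n n)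
    (X' : ℝ → Ω → Vec d) (Y' : ℝ → Ω → Vec n) (Z' : ℝ → Ω → Mat n n) : Prop :=
  (∀ᵐ ω ∂P, ∀ t ∈ Set.Icc t₁ t₂, X t ω = X' t ω ∧ Y t ω = Y' t ω) ∧
  ∀ᵐ ω ∂P, ∀ᵐ s ∂(volume.restrict (Set.Ioc t₁ t₂)), Z s ω = Z' s ω

/-- Assumption A1 of the paper on the horizon `[0,T]`: progressive measurability and
non-anticipativity of the coefficients, `K₀`-Lipschitz continuity of `b,σ,f` in
`(x,y,z)` with the path distance `‖·‖_{2,t}`, `K₁`-Lipschitz continuity of `g`, and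
square integrability of the coefficients at `0`. -/
structure A1 (P : Measure Ω) (𝓕 : Filtration ℝ mΩ) {n d : ℕ} (T : ℝ)
    (b : ℝ → Ω → PathD d → Vec n → Mat n n → Vec d)
    (σ : ℝ → Ω → PathD d → Vec n → Mat n n → Mat d n)
    (f : ℝ → Ω → PathD d → Vec n → Mat n n → Vec n)
    (g : Ω → PathD d → Vec n) (K₀ K₁ : ℝ) : Prop where
  K₀_pos : 0 < K₀
  K₁_pos : 0 < K₁
  prog_b : ∀ (x : PathD d) (y : Vec n) (z : Mat n n), ProgMeasurable 𝓕 fun t ω => b t ω x y z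
  prog_σ : ∀ (x : PathD d) (y : Vec n) (z : Mat n n), ProgMeasurable 𝓕 fun t ω => σ t ω x y z
  prog_f : ∀ (x : PathD d) (y : Vec n) (z : Mat n n), ProgMeasurable 𝓕 fun t ω => f t ω x y z
  meas_g : ∀ x : PathD d, Measurable fun ω => g ω x
  nonanticip_b : ∀ t ω y z (x x' : PathD d), (∀ s ≤ t, x s = x' s) → b t ω x y z = b t ω x' y z
  nonanticip_σ : ∀ t ω y z (x x' : PathD d), (∀ s ≤ t, x s = x' s) → σ t ω x y z = σ t ω x' y z
  nonanticip_f : ∀ t ω y z (x x' : PathD d), (∀ s ≤ t, x s = x' s) → f t ω x y z = f t ω x' y z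
  nonanticip_g : ∀ ω (x x' : PathD d), (∀ s ≤ T, x s = x' s) → g ω x = g ω x'
  lip_b : ∀ t ∈ Set.Icc (0:ℝ) T, ∀ ω (x x' : PathD d) y y' z z',
    vnorm (b t ω x y z - b t ω x' y' z')
      ≤ K₀ * (pathNorm (x - x') t + vnorm (y - y') + mnorm (z - z'))
  lip_σ : ∀ t ∈ Set.Icc (0:ℝ) T, ∀ ω (x x' : PathD d) y y' z z',
    mnorm (σ t ω x y z - σ t ω x' y' z')
      ≤ K₀ * (pathNorm (x - x') t + vnorm (y - y') + mnorm (z - z'))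
  lip_f : ∀ t ∈ Set.Icc (0:ℝ) T, ∀ ω (x x' : PathD d) y y' z z',
    vnorm (f t ω x y z - f t ω x' y' z')
      ≤ K₀ * (pathNorm (x - x') t + vnorm (y - y') + mnorm (z - z'))
  lip_g : ∀ ω (x x' : PathD d), vnorm (g ω x - g ω x') ≤ K₁ * pathNorm (x - x') T
  int_zero : ∫⁻ ω, ENNReal.ofReal
      ((∫ t in Set.Ioc (0:ℝ) T, (vnorm (b t ω 0 0 0) + vnorm (f t ω 0 0 0)))^2
        + (∫ t in Set.Ioc (0:ℝ) T, (mnorm (σ t ω 0 0 0))^2)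
        + (vnorm (g ω 0))^2) ∂P < ⊤

/-- `sZ` is a Lipschitz constant of `σ` in the `z`-variable (the quantity `|∇_z σ|_∞`). -/
def LipZCoef {n d : ℕ} (T : ℝ)
    (σ : ℝ → Ω → PathD d → Vec n → Mat n n → Mat d n) (sZ : ℝ) : Prop :=
  0 ≤ sZ ∧ ∀ t ∈ Set.Icc (0:ℝ) T, ∀ ω (x : PathD d) y z z',
    mnorm (σ t ω x y z - σ t ω x y z') ≤ sZ * mnorm (z - z')

/-- `u` is a decoupling field for the FBSDE `(b,σ,f,g)` on `[t₀,T]`. -/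
structure IsDecouplingField (P : Measure Ω) (𝓕 : Filtration ℝ mΩ) {n d : ℕ}
    {W : ℝ → Ω → Vec n} (I : ItoIntegral P 𝓕 n W)
    (b : ℝ → Ω → PathD d → Vec n → Mat n n → Vec d)
    (σ : ℝ → Ω → PathD d → Vec n → Mat n n → Mat d n)
    (f : ℝ → Ω → PathD d → Vec n → Mat n n → Vec n)
    (g : Ω → PathD d → Vec n)
    (t₀ T : ℝ) (u : ℝ → Ω → PathD d → Vec n) : Prop where
  prog : ∀ x : PathD d, ProgMeasurable 𝓕 fun t ω => u t ω x
  terminal : ∀ ω x, u T ω x = g ω x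
  loc : ∃ δ > 0, ∀ t₁ t₂ : ℝ, t₀ ≤ t₁ → t₁ < t₂ → t₂ ≤ T → t₂ - t₁ ≤ δ →
    ∀ ι : ℝ → Ω → Vec d, Adapted 𝓕 ι → (∀ ω, Continuous fun t => ι t ω) →
      (∫⁻ ω, ENNReal.ofReal ((∫ s in Set.Ioc (0:ℝ) t₁, (vnorm (ι s ω))^2)
          + (vnorm (ι t₁ ω))^2) ∂P < ⊤) →
      ∃ X Y Z, IsSolution P 𝓕 I b σ f t₁ t₂ ι (u t₂) X Y Z ∧
        (∀ᵐ ω ∂P, ∀ t ∈ Set.Icc t₁ t₂, Y t ω = u t ω fun s => X s ω) ∧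
        ∀ X' Y' Z', IsSolution P 𝓕 I b σ f t₁ t₂ ι (u t₂) X' Y' Z' →
          SolEquiv P t₁ t₂ X Y Z X' Y' Z'

/-- A regular decoupling field: a decoupling field which is uniformly Lipschitz in the
path variable w.r.t. `‖·‖_{2,t}`. -/
def IsRegularDF (P : Measure Ω) (𝓕 : Filtration ℝ mΩ) {n d : ℕ}
    {W : ℝ → Ω → Vec n} (I : ItoIntegral P 𝓕 n W)
    (b : ℝ → Ω → PathD d → Vec n → Mat n n → Vec d)
    (σ : ℝ → Ω → PathD d → Vec n → Mat n n → Mat d n)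
    (f : ℝ → Ω → PathD d → Vec n → Mat n n → Vec n)
    (g : Ω → PathD d → Vec n)
    (t₀ T : ℝ) (u : ℝ → Ω → PathD d → Vec n) : Prop :=
  IsDecouplingField P 𝓕 I b σ f g t₀ T u ∧
  ∃ K > 0, ∀ t ∈ Set.Icc t₀ T, ∀ᵐ ω ∂P, ∀ x x' : PathD d,
    vnorm (u t ω x - u t ω x') ≤ K * pathNorm (x - x') t

end
noncomputable section CharacteristicBSDE

/-- Mixed vector `(y'_1,…,y'_{k-1}, y_k, …, y_n)`. -/
def mixLt {n : ℕ} (y y' : Vec n) (k : Fin n) : Vec n := fun j => if j < k then y' j else y j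
/-- Mixed vector `(y'_1,…,y'_k, y_{k+1}, …, y_n)`. -/
def mixLe {n : ℕ} (y y' : Vec n) (k : Fin n) : Vec n := fun j => if j ≤ k then y' j else y j
/-- Mixed matrix, primed strictly before position `p` in the lexicographic enumeration. -/
def mixZLt {n : ℕ} (z z' : Mat n n) (p : Fin n × Fin n) : Mat n n :=
  fun i j => if i.1 * n + j.1 < p.1.1 * n + p.2.1 then z' i j else z i j
/-- Mixed matrix, primed up to and including position `p`. -/
def mixZLe {n : ℕ} (z z' : Mat n n) (p : Fin n × Fin n) : Mat n n :=
  fun i j => if i.1 * n + j.1 ≤ p.1.1 * n + p.2.1 then z' i j else z i j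

/-- Difference quotient of a coefficient `ξ` in the path variable, with the path
distance `‖Δx‖_{2,t}` in the denominator. -/
def dquotX {d n : ℕ} {E : Type} [AddCommGroup E] [Module ℝ E]
    (ξ : PathD d → Vec n → Mat n n → E) (t : ℝ) (x x' : PathD d) (y : Vec n) (z : Mat n n) : E :=
  (pathNorm (x - x') t)⁻¹ • (ξ x y z - ξ x' y z)

/-- Component-wise difference quotients of a coefficient `ξ` in the `y`-variable. -/
def dquotY {d n : ℕ} {E : Type} [AddCommGroup E] [Module ℝ E]
    (ξ : PathD d → Vec n → Mat n n → E) (x' : PathD d) (y y' : Vec n) (z : Mat n n) :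
    Fin n → E :=
  fun k => (y k - y' k)⁻¹ • (ξ x' (mixLt y y' k) z - ξ x' (mixLe y y' k) z)

/-- Component-wise difference quotients of a coefficient `ξ` in the `z`-variable. -/
def dquotZ {d n : ℕ} {E : Type} [AddCommGroup E] [Module ℝ E]
    (ξ : PathD d → Vec n → Mat n n → E) (x' : PathD d) (y' : Vec n) (z z' : Mat n n) :
    Fin n × Fin n → E :=
  fun p => (z p.1 p.2 - z' p.1 p.2)⁻¹ • (ξ x' y' (mixZLt z z' p) - ξ x' y' (mixZLe z z' p))

/-- The coefficients `(A_t, B_t, C_t, D_t, F_t)` of the characteristic BSDE associated to a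
pair of solutions `(X,Y,Z)`, `(X',Y',Z')` of the FBSDE, evaluated at `(t,ω)`. -/
def charCoeffs {Ω : Type} {n d : ℕ}
    (b : ℝ → Ω → PathD d → Vec n → Mat n n → Vec d)
    (σ : ℝ → Ω → PathD d → Vec n → Mat n n → Mat d n)
    (f : ℝ → Ω → PathD d → Vec n → Mat n n → Vec n)
    (X : ℝ → Ω → Vec d) (Y : ℝ → Ω → Vec n) (Z : ℝ → Ω → Mat n n)
    (X' : ℝ → Ω → Vec d) (Y' : ℝ → Ω → Vec n) (Z' : ℝ → Ω → Mat n n)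
    (t : ℝ) (ω : Ω) : Fin 5 → ℝ :=
  let x : PathD d := fun s => X s ω
  let x' : PathD d := fun s => X' s ω
  let yv : Vec n := Y t ω
  let yv' : Vec n := Y' t ω
  let zv : Mat n n := Z t ω
  let zv' : Mat n n := Z' t ω
  let D : ℝ := pathNorm (x - x') t
  let β : Vec d := D⁻¹ • (X t ω - X' t ω)
  let Pv : Vec n := (vnorm (yv - yv'))⁻¹ • (yv - yv')
  let α : Mat n n := D⁻¹ • (zv - zv')
  let bx : Vec d := dquotX (b t ω) t x x' yv zv
  let σx : Mat d n := dquotX (σ t ω) t x x' yv zv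
  let fx : Vec n := dquotX (f t ω) t x x' yv zv
  let bY : Fin n → Vec d := dquotY (b t ω) x' yv yv' zv
  let σY : Fin n → Mat d n := dquotY (σ t ω) x' yv yv' zv
  let fY : Fin n → Vec n := dquotY (f t ω) x' yv yv' zv
  let bZ : Fin n × Fin n → Vec d := dquotZ (b t ω) x' yv' zv zv'
  let σZ : Fin n × Fin n → Mat d n := dquotZ (σ t ω) x' yv' zv zv'
  let fZ : Fin n × Fin n → Vec n := dquotZ (f t ω) x' yv' zv zv'
  let σyP : Mat d n := fun i j => ∑ k, Pv k * σY k i j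
  let byP : Vec d := fun i => ∑ k, Pv k * bY k i
  let fyP : Vec n := fun i => ∑ k, Pv k * fY k i
  let trσzα : Mat d n := fun i j => ∑ p : Fin n × Fin n, α p.1 p.2 * σZ p i j
  let trbzα : Vec d := fun i => ∑ p : Fin n × Fin n, α p.1 p.2 * bZ p i
  let trfzα : Vec n := fun i => ∑ p : Fin n × Fin n, α p.1 p.2 * fZ p i
  let S : Mat d n := σx + trσzα
  ![ mdot σyP σyP - 8 * vdot (mvMul (transp σyP) β) (mvMul (transp σyP) β),
     2 * vdot β byP + 2 * mdot σyP S - 16 * vdot (mvMul (transp σyP) β) (mvMul (transp S) β),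
     2 * vdot Pv fyP + vdot β β + 2 * vdot β (bx + trbzα) + mdot σx σx
       - 8 * vdot (mvMul (transp σx) β) (mvMul (transp σx) β),
     2 * vdot Pv fx + 2 * vdot Pv trfzα,
     - mdot α α ]

/-- The polynomial `𝓕_t(h) = A_t h² + B_t h^{3/2} + C_t h + D_t h^{1/2} + F_t` appearing as
the driver of the characteristic BSDE. -/
def charPoly {Ω : Type} {n d : ℕ}
    (b : ℝ → Ω → PathD d → Vec n → Mat n n → Vec d)
    (σ : ℝ → Ω → PathD d → Vec n → Mat n n → Mat d n)
    (f : ℝ → Ω → PathD d → Vec n → Mat n n → Vec n)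
    (X : ℝ → Ω → Vec d) (Y : ℝ → Ω → Vec n) (Z : ℝ → Ω → Mat n n)
    (X' : ℝ → Ω → Vec d) (Y' : ℝ → Ω → Vec n) (Z' : ℝ → Ω → Mat n n)
    (t : ℝ) (ω : Ω) (h : ℝ) : ℝ :=
  charCoeffs b σ f X Y Z X' Y' Z' t ω 0 * h^2
    + charCoeffs b σ f X Y Z X' Y' Z' t ω 1 * (h * Real.sqrt h)
    + charCoeffs b σ f X Y Z X' Y' Z' t ω 2 * h
    + charCoeffs b σ f X Y Z X' Y' Z' t ω 3 * Real.sqrt h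
    + charCoeffs b σ f X Y Z X' Y' Z' t ω 4

/-- The ODE `ẏ_t = −G(t,y_t)` is a dominating ODE of the FBSDE `(b,σ,f,g)` on `[0,T]`:
(i) along any pair of solutions the driver `𝓕_t` of the characteristic BSDE is bounded by
`G(t,·)` a.s., and (ii) `G` and `∂G/∂h` are locally bounded by `L¹` functions of time. -/
def IsDominatingODE {Ω : Type} [mΩ : MeasurableSpace Ω] (P : Measure Ω)
    (𝓕 : Filtration ℝ mΩ) {n d : ℕ} {W : ℝ → Ω → Vec n} (I : ItoIntegral P 𝓕 n W)
    (b : ℝ → Ω → PathD d → Vec n → Mat n n → Vec d)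
    (σ : ℝ → Ω → PathD d → Vec n → Mat n n → Mat d n)
    (f : ℝ → Ω → PathD d → Vec n → Mat n n → Vec n)
    (g : Ω → PathD d → Vec n)
    (T : ℝ) (G : ℝ → ℝ → ℝ) : Prop :=
  (∀ t₀ ∈ Set.Icc (0:ℝ) T, ∀ (ι ι' : ℝ → Ω → Vec d)
      (X : ℝ → Ω → Vec d) (Y : ℝ → Ω → Vec n) (Z : ℝ → Ω → Mat n n)
      (X' : ℝ → Ω → Vec d) (Y' : ℝ → Ω → Vec n) (Z' : ℝ → Ω → Mat n n),
    IsSolution P 𝓕 I b σ f t₀ T ι g X Y Z →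
    IsSolution P 𝓕 I b σ f t₀ T ι' g X' Y' Z' →
    ∀ t ∈ Set.Icc t₀ T, ∀ᵐ ω ∂P, ∀ h : ℝ, 0 ≤ h →
      charPoly b σ f X Y Z X' Y' Z' t ω h ≤ G t h) ∧
  (∀ M > (0:ℝ), ∃ l lhat : ℝ → ℝ,
    IntegrableOn l (Set.Icc (0:ℝ) T) volume ∧ IntegrableOn lhat (Set.Icc (0:ℝ) T) volume ∧
    ∀ t ∈ Set.Icc (0:ℝ) T, ∀ h ∈ Set.Icc (-M) M, |G t h| ≤ l t ∧ |deriv (G t) h| ≤ lhat t)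

end CharacteristicBSDE


section AuxDelarue
open MeasureTheory ProbabilityTheory Filter Set
open scoped ENNReal NNReal

/-- auxiliary: squared Frobenius norm of a 1×1 matrix -/
lemma aux_mnorm_sq_mat1 (A : Mat 1 1) : (mnorm A)^2 = (A 0 0)^2 := by
  have h : mdot A A = (A 0 0)^2 := by simp [mdot, Fin.sum_univ_one, sq]
  rw [mnorm, h, Real.sq_sqrt (sq_nonneg _)]

lemma aux_mat1_entry (A : Mat 1 1) (i j : Fin 1) : A i j = A 0 0 := by
  rw [Fin.eq_zero i, Fin.eq_zero j]

/-- The junk function `s ↦ 1/s` on `(0,∞)`. -/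
noncomputable def jfun (s : ℝ) : ℝ := if 0 < s then s⁻¹ else 0

lemma jfun_measurable : Measurable jfun :=
  Measurable.ite measurableSet_Ioi measurable_inv measurable_const

lemma jfun_sq_not_integrable {T : ℝ} (hT : 0 < T) :
    ¬ IntegrableOn (fun s => (jfun s)^2) (Set.Ioc 0 T) volume := by
  intro h
  have h2 : IntegrableOn (fun s => s ^ (-2 : ℝ)) (Set.Ioo 0 T) volume := by
    refine (h.mono_set Set.Ioo_subset_Ioc_self).congr_fun ?_ measurableSet_Ioo
    intro s hs
    have h1 : jfun s = s⁻¹ := if_pos hs.1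
    show jfun s ^ 2 = s ^ (-2:ℝ)
    rw [h1, show (-2:ℝ) = -(2:ℕ) by norm_num, Real.rpow_neg hs.1.le,
      Real.rpow_natCast, ← inv_pow]
  rw [intervalIntegral.integrableOn_Ioo_rpow_iff hT] at h2
  norm_num at h2

lemma aux_integrableOn_sq_sub {μ : Measure ℝ} {g h : ℝ → ℝ}
    (hg : AEStronglyMeasurable g μ) (hh : AEStronglyMeasurable h μ)
    (h1 : Integrable (fun s => (g s)^2) μ) (h2 : Integrable (fun s => (h s)^2) μ) :
    Integrable (fun s => (g s - h s)^2) μ := by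
  have m1 : MemLp g 2 μ := (memLp_two_iff_integrable_sq hg).2 h1
  have m2 : MemLp h 2 μ := (memLp_two_iff_integrable_sq hh).2 h2
  exact (memLp_two_iff_integrable_sq (hg.sub hh)).1 (m1.sub m2)

lemma aux_gaussianReal_Iic_zero {v : ℝ≥0} (hv : v ≠ 0) :
    gaussianReal 0 v (Set.Iic 0) = 1 / 2 := by
  have hmap : (gaussianReal 0 v).map (fun x => (-1 : ℝ) * x) = gaussianReal 0 v := by
    rw [gaussianReal_map_const_mul]
    have h1 : (-1 : ℝ) * 0 = 0 := by ring
    have h2 : (⟨(-1:ℝ)^2, sq_nonneg _⟩ : ℝ≥0) = 1 := by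
      apply Subtype.ext; norm_num
    rw [h1]
    congr 1
    ext
    simp
  have hIic : gaussianReal 0 v (Set.Iic 0) = gaussianReal 0 v (Set.Ici 0) := by
    conv_lhs => rw [← hmap]
    rw [Measure.map_apply (measurable_const_mul _) measurableSet_Iic]
    congr 1
    ext x
    simp only [Set.mem_preimage, Set.mem_Iic, Set.mem_Ici]
    constructor <;> intro h <;> nlinarith
  have h0 : gaussianReal 0 v {0} = 0 :=
    gaussianReal_absolutelyContinuous 0 hv (measure_singleton 0)
  have hIci : gaussianReal 0 v (Set.Ici 0) = gaussianReal 0 v (Set.Ioi 0) := by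
    have he : Set.Ici (0:ℝ) = Set.Ioi 0 ∪ {0} := by
      ext x
      simp only [Set.mem_Ici, Set.mem_union, Set.mem_Ioi, Set.mem_singleton_iff]
      constructor
      · intro h; rcases eq_or_lt_of_le h with h | h
        · exact Or.inr h.symm
        · exact Or.inl h
      · rintro (h | h)
        · exact h.le
        · exact h.ge
    rw [he]
    refine le_antisymm ((measure_union_le _ _).trans ?_) (measure_mono Set.subset_union_left)
    rw [h0, add_zero]
  rw [hIic, hIci]
  have hc : gaussianReal 0 v (Set.Ioi 0) + gaussianReal 0 v (Set.Ioi 0) = 1 := by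
    have := measure_add_measure_compl (μ := gaussianReal 0 v) (measurableSet_Iic (a := (0:ℝ)))
    rw [Set.compl_Iic, measure_univ, hIic, hIci] at this
    exact this
  rw [ENNReal.eq_div_iff (by norm_num) (by norm_num), two_mul]
  exact hc

end AuxDelarue

/-- **Delarue's counterexample, case `k ≠ 0`.** The FBSDE `dX = (k+Z) dW`, `X₀ = x`,
`dY = Z dW`, `Y_T = X_T` (i.e. `b = 0`, `σ(z) = k + z`, `f = 0`, `g(x) = x(T)`, in
dimension `d = n = 1`) admits no solution of adapted square-integrable processes. -/
theorem delarue_no_solution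
    {Ω : Type} [mΩ : MeasurableSpace Ω] (P : Measure Ω) [IsProbabilityMeasure P]
    (𝓕 : Filtration ℝ mΩ) {W : ℝ → Ω → Vec 1}
    (hW : IsBrownianMotion P 𝓕 W) (I : ItoIntegral P 𝓕 1 W)
    (k : ℝ) (hk : k ≠ 0) (T : ℝ) (hT : 0 < T) (x₀ : ℝ) :
    ¬ ∃ (X : ℝ → Ω → Vec 1) (Y : ℝ → Ω → Vec 1) (Z : ℝ → Ω → Mat 1 1),
      IsSolution P 𝓕 I
        (fun _ _ _ _ _ => (0 : Vec 1))                 -- b = 0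
        (fun _ _ _ _ z => fun i j => k + z i j)        -- σ = k + z
        (fun _ _ _ _ _ => (0 : Vec 1))                 -- f = 0
        0 T (fun _ _ => fun _ => x₀) (fun _ x => x T)  -- X₀ = x₀, Y_T = X_T
        X Y Z := by
  rintro ⟨X, Y, Z, hsol⟩
  -- Joint measurability of the (time-truncated) coefficient `Z`
  have hz : ∀ q : ℝ, Measurable fun p : ℝ × Ω => Z (min p.1 q) p.2 0 0 := by
    intro q
    have h1 : Measurable[Subtype.instMeasurableSpace.prod (𝓕 q)]
        (fun p : Set.Iic q × Ω => Z p.1 p.2) := (hsol.Z_prog q).measurable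
    have hle : (Subtype.instMeasurableSpace : MeasurableSpace (Set.Iic q)).prod (𝓕 q)
        ≤ Subtype.instMeasurableSpace.prod mΩ :=
      sup_le_sup le_rfl (MeasurableSpace.comap_mono (𝓕.le q))
    have h2 : Measurable (fun p : Set.Iic q × Ω => Z p.1 p.2) := h1.mono hle le_rfl
    have hφ : Measurable (fun p : ℝ × Ω =>
        ((⟨min p.1 q, Set.mem_Iic.2 (min_le_right _ _)⟩ : Set.Iic q), p.2)) :=
      ((measurable_fst.min measurable_const).subtype_mk).prodMk measurable_snd
    exact (measurable_pi_apply 0).comp ((measurable_pi_apply 0).comp (h2.comp hφ))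
  have hzsec : ∀ (q : ℝ) (ω : Ω), AEStronglyMeasurable (fun s => Z s ω 0 0)
      (volume.restrict (Set.Ioc (0:ℝ) q)) := by
    intro q ω
    have hm : Measurable fun s : ℝ => Z (min s q) ω 0 0 :=
      (hz q).comp (measurable_id.prodMk measurable_const)
    refine hm.aestronglyMeasurable.congr ?_
    filter_upwards [ae_restrict_mem measurableSet_Ioc] with s hs
    rw [min_eq_left hs.2]
  -- measurability of the truncated L² masses
  have hFmeas : ∀ (q c : ℝ), Measurable fun ω =>
      ∫ s in Set.Ioc (0:ℝ) q, (Z s ω 0 0 - c * jfun s)^2 := by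
    intro q c
    have hG : Measurable fun p : Ω × ℝ =>
        if p.2 ∈ Set.Ioc (0:ℝ) q then (Z (min p.2 q) p.1 0 0 - c * jfun p.2)^2 else 0 := by
      refine Measurable.ite (measurable_snd measurableSet_Ioc) ?_ measurable_const
      exact (((hz q).comp measurable_swap).sub
        ((jfun_measurable.comp measurable_snd).const_mul c)).pow_const 2
    have key : (fun ω => ∫ s in Set.Ioc (0:ℝ) q, (Z s ω 0 0 - c * jfun s)^2)
        = fun ω => ∫ s, (if s ∈ Set.Ioc (0:ℝ) q then
            (Z (min s q) ω 0 0 - c * jfun s)^2 else 0) ∂volume := by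
      funext ω
      rw [← MeasureTheory.integral_indicator measurableSet_Ioc]
      congr 1
      funext s
      rw [Set.indicator_apply]
      by_cases hs : s ∈ Set.Ioc (0:ℝ) q
      · rw [if_pos hs, if_pos hs, min_eq_left hs.2]
      · rw [if_neg hs, if_neg hs]
    rw [key]
    exact hG.stronglyMeasurable.integral_prod_right'.measurable
  -- integral nonzero ⇒ integrable & positive horizon
  have hne_int : ∀ {q c : ℝ} {ω : Ω},
      (∫ s in Set.Ioc (0:ℝ) q, (Z s ω 0 0 - c * jfun s)^2) ≠ 0 →
      IntegrableOn (fun s => (Z s ω 0 0 - c * jfun s)^2) (Set.Ioc 0 q) volume ∧ 0 < q := by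
    intro q c ω hne
    constructor
    · by_contra h; exact hne (integral_undef h)
    · by_contra h
      apply hne
      rw [Set.Ioc_eq_empty h, Measure.restrict_empty, integral_zero_measure]
  -- the exceptional sets, pairwise disjoint in the scaling parameter
  have hdisj : Pairwise (Function.onFun Disjoint (fun c : ℝ => ⋃ q : ℚ,
      {ω | (∫ s in Set.Ioc (0:ℝ) (q:ℝ), (Z s ω 0 0 - c * jfun s)^2) ≠ 0})) := by
    intro c c' hcc
    refine Set.disjoint_left.2 ?_
    rintro ω hω hω'
    obtain ⟨q, hq⟩ := Set.mem_iUnion.1 hω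
    obtain ⟨q', hq'⟩ := Set.mem_iUnion.1 hω'
    obtain ⟨hint, hqpos⟩ := hne_int hq
    obtain ⟨hint', hqpos'⟩ := hne_int hq'
    have hrpos : (0:ℝ) < min (q:ℝ) (q':ℝ) := lt_min hqpos hqpos'
    have hi1 : IntegrableOn (fun s => (Z s ω 0 0 - c * jfun s)^2)
        (Set.Ioc 0 (min (q:ℝ) (q':ℝ))) volume :=
      hint.mono_set (Set.Ioc_subset_Ioc le_rfl (min_le_left _ _))
    have hi2 : IntegrableOn (fun s => (Z s ω 0 0 - c' * jfun s)^2)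
        (Set.Ioc 0 (min (q:ℝ) (q':ℝ))) volume :=
      hint'.mono_set (Set.Ioc_subset_Ioc le_rfl (min_le_right _ _))
    have hmg : AEStronglyMeasurable (fun s => Z s ω 0 0 - c * jfun s)
        (volume.restrict (Set.Ioc (0:ℝ) (min (q:ℝ) (q':ℝ)))) :=
      (hzsec _ ω).sub (jfun_measurable.const_mul c).aestronglyMeasurable
    have hmh : AEStronglyMeasurable (fun s => Z s ω 0 0 - c' * jfun s)
        (volume.restrict (Set.Ioc (0:ℝ) (min (q:ℝ) (q':ℝ)))) :=
      (hzsec _ ω).sub (jfun_measurable.const_mul c').aestronglyMeasurable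
    have hsub := aux_integrableOn_sq_sub hmg hmh hi1 hi2
    have hcc' : c' - c ≠ 0 := sub_ne_zero.2 (Ne.symm hcc)
    have hj2 : IntegrableOn (fun s => (jfun s)^2) (Set.Ioc 0 (min (q:ℝ) (q':ℝ))) volume := by
      have h1 : IntegrableOn (fun s => ((c' - c) * jfun s)^2)
          (Set.Ioc 0 (min (q:ℝ) (q':ℝ))) volume := by
        refine hsub.congr (Filter.Eventually.of_forall fun s => ?_)
        ring
      have h2 := h1.const_mul (((c' - c)^2)⁻¹)
      refine h2.congr (Filter.Eventually.of_forall fun s => ?_)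
      show ((c' - c)^2)⁻¹ * ((c' - c) * jfun s)^2 = (jfun s)^2
      rw [mul_pow, ← mul_assoc, inv_mul_cancel₀ (pow_ne_zero 2 hcc'), one_mul]
    exact jfun_sq_not_integrable hrpos hj2
  have hSmeas : ∀ c : ℝ, MeasurableSet (⋃ q : ℚ,
      {ω | (∫ s in Set.Ioc (0:ℝ) (q:ℝ), (Z s ω 0 0 - c * jfun s)^2) ≠ 0}) := by
    intro c
    refine MeasurableSet.iUnion fun q => ?_
    exact (hFmeas q c (measurableSet_singleton 0)).compl
  have hcnt := MeasureTheory.Measure.countable_meas_pos_of_disjoint_iUnion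
    (μ := P) hSmeas hdisj
  obtain ⟨c, hc⟩ : ∃ c : ℝ, c ∉ insert (0:ℝ) {c : ℝ | 0 < P (⋃ q : ℚ,
      {ω | (∫ s in Set.Ioc (0:ℝ) (q:ℝ), (Z s ω 0 0 - c * jfun s)^2) ≠ 0})} := by
    by_contra hcon
    push_neg at hcon
    have : (Set.univ : Set ℝ).Countable := by
      rw [← Set.eq_univ_of_forall hcon]
      exact hcnt.insert 0
    exact Set.not_countable_univ this
  have hc0 : c ≠ 0 := fun h => hc (h ▸ Set.mem_insert _ _)
  have hcP : P (⋃ q : ℚ,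
      {ω | (∫ s in Set.Ioc (0:ℝ) (q:ℝ), (Z s ω 0 0 - c * jfun s)^2) ≠ 0}) = 0 := by
    have h1 : ¬ 0 < P (⋃ q : ℚ,
        {ω | (∫ s in Set.Ioc (0:ℝ) (q:ℝ), (Z s ω 0 0 - c * jfun s)^2) ≠ 0}) :=
      fun h => hc (Set.mem_insert_of_mem _ h)
    exact le_antisymm (not_lt.1 h1) (zero_le)
  have hgood : ∀ᵐ ω ∂P, ∀ q : ℚ,
      (∫ s in Set.Ioc (0:ℝ) (q:ℝ), (Z s ω 0 0 - c * jfun s)^2) = 0 := by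
    refine ae_iff.2 (measure_mono_null ?_ hcP)
    intro ω hω
    simp only [Set.mem_setOf_eq, not_forall] at hω
    obtain ⟨q, hq⟩ := hω
    exact Set.mem_iUnion.2 ⟨q, hq⟩
  -- per-ω kernel: vanishing at all rational horizons kills the integrand a.e.
  have hker : ∀ ω, (∀ q : ℚ, (∫ s in Set.Ioc (0:ℝ) (q:ℝ), (Z s ω 0 0 - c * jfun s)^2) = 0) →
      ∀ T' : ℝ, IntegrableOn (fun s => (Z s ω 0 0 - c * jfun s)^2) (Set.Ioc 0 T') volume →
      ∀ᵐ s ∂(volume.restrict (Set.Ioc (0:ℝ) T')), Z s ω 0 0 - c * jfun s = 0 := by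
    intro ω hq T' hInt
    rw [ae_iff, Measure.restrict_apply' measurableSet_Ioc]
    have hsub : {s : ℝ | ¬ (Z s ω 0 0 - c * jfun s = 0)} ∩ Set.Ioc 0 T' ⊆
        {T'} ∪ ⋃ (q : ℚ), ⋃ (_ : (q:ℝ) ≤ T'),
          ({s : ℝ | Z s ω 0 0 - c * jfun s ≠ 0} ∩ Set.Ioc 0 (q:ℝ)) := by
      rintro s ⟨hfs, hs1, hs2⟩
      rcases eq_or_lt_of_le hs2 with h | h
      · exact Or.inl (by simp [h])
      · obtain ⟨q, hq1, hq2⟩ := exists_rat_btwn h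
        exact Or.inr (Set.mem_iUnion.2 ⟨q, Set.mem_iUnion.2 ⟨hq2.le, hfs, hs1, hq1.le⟩⟩)
    refine measure_mono_null hsub (measure_union_null (measure_singleton _) ?_)
    refine measure_iUnion_null fun q => measure_iUnion_null fun hqT => ?_
    by_cases hq0 : (0:ℝ) < (q:ℝ)
    · have hIq : IntegrableOn (fun s => (Z s ω 0 0 - c * jfun s)^2)
          (Set.Ioc 0 (q:ℝ)) volume := hInt.mono_set (Set.Ioc_subset_Ioc le_rfl hqT)
      have h0 := (integral_eq_zero_iff_of_nonneg_ae
        (Filter.Eventually.of_forall fun s => sq_nonneg _) hIq).1 (hq q)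
      rw [Filter.EventuallyEq, ae_iff, Measure.restrict_apply' measurableSet_Ioc] at h0
      refine measure_mono_null ?_ h0
      rintro s ⟨hs1, hs2⟩
      refine ⟨?_, hs2⟩
      simp only [Set.mem_setOf_eq, Pi.zero_apply]
      exact fun hcon => hs1 (sq_eq_zero_iff.1 hcon)
    · rw [Set.Ioc_eq_empty hq0, Set.inter_empty]
      exact measure_empty
  -- square-integrability conditions for the pieces of the decomposition
  have gJ1 : ∀ Tq : ℝ, 0 ≤ Tq → ∫⁻ ω, ENNReal.ofReal (∫ s in Set.Ioc (0:ℝ) Tq,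
      (mnorm ((fun s (ω' : Ω) => (fun _ _ => Z s ω' 0 0 - c * jfun s : Mat 1 1)) s ω))^2) ∂P
      < ⊤ := by
    intro Tq _
    simp only [aux_mnorm_sq_mat1]
    have hae : ∀ᵐ ω ∂P, ENNReal.ofReal
        (∫ s in Set.Ioc (0:ℝ) Tq, (Z s ω 0 0 - c * jfun s)^2) = 0 := by
      filter_upwards [hgood] with ω hω
      by_cases hI : IntegrableOn (fun s => (Z s ω 0 0 - c * jfun s)^2)
          (Set.Ioc 0 Tq) volume
      · have h0 := hker ω hω Tq hI
        have hz0 : (∫ s in Set.Ioc (0:ℝ) Tq, (Z s ω 0 0 - c * jfun s)^2) = 0 := by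
          refine integral_eq_zero_of_ae ?_
          filter_upwards [h0] with s hs
          simp [hs]
        rw [hz0, ENNReal.ofReal_zero]
      · rw [integral_undef hI, ENNReal.ofReal_zero]
    rw [lintegral_congr_ae hae, lintegral_zero]
    exact ENNReal.zero_lt_top
  have gJ2 : ∀ Tq : ℝ, 0 ≤ Tq → ∫⁻ ω, ENNReal.ofReal (∫ s in Set.Ioc (0:ℝ) Tq,
      (mnorm ((fun s (_ : Ω) => (fun _ _ => c * jfun s : Mat 1 1)) s ω))^2) ∂P < ⊤ := by
    intro Tq hTq
    simp only [aux_mnorm_sq_mat1]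
    have hval : (∫ s in Set.Ioc (0:ℝ) Tq, (c * jfun s)^2) = 0 := by
      rcases lt_or_eq_of_le hTq with hpos | h0
      · refine integral_undef fun hI => ?_
        have h2 := hI.const_mul ((c^2)⁻¹)
        have h3 : IntegrableOn (fun s => (jfun s)^2) (Set.Ioc 0 Tq) volume := by
          refine h2.congr (Filter.Eventually.of_forall fun s => ?_)
          show (c^2)⁻¹ * (c * jfun s)^2 = (jfun s)^2
          rw [mul_pow, ← mul_assoc, inv_mul_cancel₀ (pow_ne_zero 2 hc0), one_mul]
        exact jfun_sq_not_integrable hpos h3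
      · rw [← h0, Set.Ioc_self, Measure.restrict_empty, integral_zero_measure]
    simp only [hval, ENNReal.ofReal_zero, lintegral_const, zero_mul]
    exact ENNReal.zero_lt_top
  have gC : ∀ Tq : ℝ, 0 ≤ Tq → ∫⁻ ω, ENNReal.ofReal (∫ s in Set.Ioc (0:ℝ) Tq,
      (mnorm ((fun (_:ℝ) (_:Ω) => (fun _ _ => k : Mat 1 1)) s ω))^2) ∂P < ⊤ := by
    intro Tq hTq
    simp only [aux_mnorm_sq_mat1, MeasureTheory.setIntegral_const, smul_eq_mul,
      lintegral_const, measure_univ, mul_one]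
    exact ENNReal.ofReal_lt_top
  have gCJ : ∀ Tq : ℝ, 0 ≤ Tq → ∫⁻ ω, ENNReal.ofReal (∫ s in Set.Ioc (0:ℝ) Tq,
      (mnorm ((fun s (ω' : Ω) =>
        (fun _ _ => k + (Z s ω' 0 0 - c * jfun s) : Mat 1 1)) s ω))^2) ∂P < ⊤ := by
    intro Tq hTq
    simp only [aux_mnorm_sq_mat1]
    have hbd : ∀ᵐ ω ∂P, ENNReal.ofReal
        (∫ s in Set.Ioc (0:ℝ) Tq, (k + (Z s ω 0 0 - c * jfun s))^2)
        ≤ ENNReal.ofReal (k^2 * Tq) := by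
      filter_upwards [hgood] with ω hω
      refine ENNReal.ofReal_le_ofReal ?_
      by_cases hI : IntegrableOn (fun s => (k + (Z s ω 0 0 - c * jfun s))^2)
          (Set.Ioc 0 Tq) volume
      · have hfm : AEStronglyMeasurable (fun s => Z s ω 0 0 - c * jfun s)
            (volume.restrict (Set.Ioc (0:ℝ) Tq)) :=
          (hzsec Tq ω).sub (jfun_measurable.const_mul c).aestronglyMeasurable
        have hkm : AEStronglyMeasurable (fun s => k + (Z s ω 0 0 - c * jfun s))
            (volume.restrict (Set.Ioc (0:ℝ) Tq)) := hfm.const_add k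
        have m1 : MemLp (fun s => k + (Z s ω 0 0 - c * jfun s)) 2
            (volume.restrict (Set.Ioc (0:ℝ) Tq)) :=
          (memLp_two_iff_integrable_sq hkm).2 hI
        have m2 : MemLp (fun s => Z s ω 0 0 - c * jfun s) 2
            (volume.restrict (Set.Ioc (0:ℝ) Tq)) := by
          have hsub := m1.sub (memLp_const (p := (2:ℝ≥0∞))
            (μ := volume.restrict (Set.Ioc (0:ℝ) Tq)) k)
          have he : ((fun s => k + (Z s ω 0 0 - c * jfun s)) - fun _ => k)
              = fun s => Z s ω 0 0 - c * jfun s := by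
            funext s
            simp only [Pi.sub_apply]
            ring
          rwa [he] at hsub
        have hI2 : IntegrableOn (fun s => (Z s ω 0 0 - c * jfun s)^2)
            (Set.Ioc 0 Tq) volume := (memLp_two_iff_integrable_sq hfm).1 m2
        have h0 := hker ω hω Tq hI2
        have hval : (∫ s in Set.Ioc (0:ℝ) Tq, (k + (Z s ω 0 0 - c * jfun s))^2)
            = ∫ s in Set.Ioc (0:ℝ) Tq, k^2 := by
          refine integral_congr_ae ?_
          filter_upwards [h0] with s hs
          rw [hs, add_zero]
        rw [hval, MeasureTheory.setIntegral_const, smul_eq_mul, Real.volume_real_Ioc_of_le hTq]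
        nlinarith [sq_nonneg k]
      · rw [integral_undef hI]
        exact mul_nonneg (sq_nonneg k) hTq
    refine lt_of_le_of_lt (lintegral_mono_ae hbd) ?_
    rw [lintegral_const, measure_univ, mul_one]
    exact ENNReal.ofReal_lt_top
  -- progressive measurability of the pieces
  have progC : ProgMeasurable 𝓕 (fun (_:ℝ) (_:Ω) => (fun _ _ => k : Mat 1 1)) :=
    progMeasurable_const 𝓕 _
  have hwrap : Measurable fun x : ℝ => (fun _ _ => x : Mat 1 1) :=
    measurable_pi_lambda _ fun _ => measurable_pi_lambda _ fun _ => measurable_id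
  have progJ2 : ProgMeasurable 𝓕 (fun s (_:Ω) => (fun _ _ => c * jfun s : Mat 1 1)) := by
    intro t
    refine Measurable.stronglyMeasurable ?_
    exact hwrap.comp
      ((jfun_measurable.comp (measurable_subtype_coe.comp measurable_fst)).const_mul c)
  have hZm : ∀ t : ℝ, Measurable[Subtype.instMeasurableSpace.prod (𝓕 t)]
      fun p : Set.Iic t × Ω => Z p.1 p.2 0 0 := fun t =>
    (measurable_pi_apply 0).comp ((measurable_pi_apply 0).comp (hsol.Z_prog t).measurable)
  have progJ1 : ProgMeasurable 𝓕
      (fun s ω => (fun _ _ => Z s ω 0 0 - c * jfun s : Mat 1 1)) := by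
    intro t
    refine Measurable.stronglyMeasurable ?_
    exact hwrap.comp ((hZm t).sub
      ((jfun_measurable.comp (measurable_subtype_coe.comp measurable_fst)).const_mul c))
  have progCJ : ProgMeasurable 𝓕
      (fun s ω => (fun _ _ => k + (Z s ω 0 0 - c * jfun s) : Mat 1 1)) := by
    intro t
    refine Measurable.stronglyMeasurable ?_
    exact hwrap.comp (((hZm t).sub
      ((jfun_measurable.comp (measurable_subtype_coe.comp measurable_fst)).const_mul c)).const_add k)
  -- additivity of the stochastic integral along the decomposition
  have hA3 := I.integ_add _ _ progJ1 progJ2 gJ1 gJ2 T hT.le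
  have hA1 := I.integ_add _ _ progC progJ1 gC gJ1 T hT.le
  have hA2 := I.integ_add _ _ progCJ progJ2 gCJ gJ2 T hT.le
  beta_reduce at hA1 hA2 hA3
  have hZeq : (fun (s : ℝ) (ω' : Ω) => ((fun _ _ => Z s ω' 0 0 - c * jfun s : Mat 1 1)
      + (fun _ _ => c * jfun s : Mat 1 1))) = Z := by
    funext s ω' i i'
    simp only [Pi.add_apply]
    rw [aux_mat1_entry (Z s ω') i i']
    ring
  rw [hZeq] at hA3
  have hCJeq : (fun (s : ℝ) (ω' : Ω) => ((fun _ _ => k : Mat 1 1)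
      + (fun _ _ => Z s ω' 0 0 - c * jfun s : Mat 1 1)))
      = fun (s : ℝ) (ω' : Ω) => (fun _ _ => k + (Z s ω' 0 0 - c * jfun s) : Mat 1 1) := by
    funext s ω' i i'
    simp only [Pi.add_apply]
  rw [hCJeq] at hA1
  have hσeq : (fun (s : ℝ) (ω' : Ω) =>
      ((fun _ _ => k + (Z s ω' 0 0 - c * jfun s) : Mat 1 1)
        + (fun _ _ => c * jfun s : Mat 1 1)))
      = fun (s : ℝ) (ω' : Ω) => (fun i j => k + Z s ω' i j : Mat 1 1) := by
    funext s ω' i i'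
    simp only [Pi.add_apply]
    rw [aux_mat1_entry (Z s ω') i i']
    ring
  rw [hσeq] at hA2
  -- use the forward and backward equations
  have hfw := hsol.forward
  have hbw := hsol.backward
  beta_reduce at hfw hbw
  have hkey : ∀ᵐ ω ∂P, Y 0 ω 0 = x₀ + k * W T ω 0 := by
    filter_upwards [hA1, hA2, hA3, hfw, hbw] with ω h1 h2 h3 hf hb
    have hfT := hf T ⟨hT.le, le_rfl⟩
    have hb0 := hb 0 ⟨le_rfl, hT.le⟩
    have hz1 : I.integ (fun (s:ℝ) (ω' : Ω) => (fun i j => k + Z s ω' i j : Mat 1 1)) 0 ω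
        = 0 := by rw [I.integ_zero]; rfl
    have hz2 : I.integ Z 0 ω = 0 := by rw [I.integ_zero]; rfl
    have hXT := congrFun hfT 0
    simp only [Pi.add_apply, Pi.sub_apply, integral_zero, Pi.zero_apply, hz1,
      sub_zero, add_zero] at hXT
    have hY0 := congrFun hb0 0
    simp only [Pi.add_apply, Pi.sub_apply, integral_zero, Pi.zero_apply, hz2,
      sub_zero, add_zero] at hY0
    have e1 := congrFun h1 0
    have e2 := congrFun h2 0
    have e3 := congrFun h3 0
    simp only [Pi.add_apply] at e1 e2 e3
    have hCk := congrFun (I.integ_const (fun _ _ => k : Mat 1 1) T hT.le ω) 0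
    have hmv : mvMul (fun _ _ => k : Mat 1 1) (W T ω) 0 = k * W T ω 0 := by
      simp [mvMul, Fin.sum_univ_one]
    rw [hY0, hXT, e2, e1, e3, hCk, hmv]
    ring
  -- the Gaussian / independence contradiction
  have hWm : Measurable fun ω => W T ω 0 :=
    (measurable_pi_apply 0).comp (((hW.adapted T)).mono (𝓕.le T) le_rfl)
  have hindep := hW.indep_past 0 T le_rfl hT.le
  have hWfun : (fun ω => W T ω - W 0 ω) = fun ω => W T ω := by
    funext ω; rw [hW.zero ω, sub_zero]
  rw [hWfun] at hindep
  set A : Set Ω := (fun ω => W T ω) ⁻¹' {v : Vec 1 | v 0 ≤ 0} with hAdef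
  have hAmeas : MeasurableSet[MeasurableSpace.comap (fun ω => W T ω) inferInstance] A :=
    ⟨{v : Vec 1 | v 0 ≤ 0}, measurable_pi_apply 0 measurableSet_Iic, rfl⟩
  set B : Set Ω := {ω | k⁻¹ * (Y 0 ω 0 - x₀) ≤ 0} with hBdef
  have hBmeas : MeasurableSet[𝓕 0] B := by
    have hY0m : Measurable[𝓕 0] fun ω => Y 0 ω 0 :=
      (measurable_pi_apply 0).comp (hsol.Y_adapted 0)
    exact measurableSet_le ((hY0m.sub measurable_const).const_mul k⁻¹) measurable_const
  have hprod := (ProbabilityTheory.Indep_iff _ _ P).1 hindep A B hAmeas hBmeas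
  have hABae : ∀ᵐ ω ∂P, (ω ∈ A ↔ ω ∈ B) := by
    filter_upwards [hkey] with ω hωk
    have hval : k⁻¹ * (Y 0 ω 0 - x₀) = W T ω 0 := by
      rw [hωk]; field_simp; ring
    simp only [hAdef, hBdef, Set.mem_preimage, Set.mem_setOf_eq, hval]
  have hABeq : A =ᵐ[P] B := Filter.eventuallyEq_set.2 hABae
  have hPB : P B = P A := measure_congr hABeq.symm
  have hPAB : P (A ∩ B) = P A := by
    have h1 : (A ∩ B : Set Ω) =ᵐ[P] A := by
      rw [Filter.eventuallyEq_set]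
      filter_upwards [hABae] with ω hω
      simp only [Set.mem_inter_iff]
      tauto
    exact measure_congr h1
  have hmap := hW.gauss_law 0 T le_rfl hT.le 0
  have hWfun2 : (fun ω => W T ω 0 - W 0 ω 0) = fun ω => W T ω 0 := by
    funext ω
    rw [show W 0 ω 0 = 0 from by rw [hW.zero ω]; rfl, sub_zero]
  rw [hWfun2, sub_zero] at hmap
  have hPA : P A = 1 / 2 := by
    have h1 : P A = P.map (fun ω => W T ω 0) (Set.Iic 0) := by
      rw [Measure.map_apply hWm measurableSet_Iic]
      rfl
    rw [h1, hmap]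
    refine aux_gaussianReal_Iic_zero ?_
    rw [Ne, Real.toNNReal_eq_zero]
    exact not_le.2 hT
  rw [hPAB, hPB, hPA] at hprod
  have hfalse := congrArg ENNReal.toReal hprod
  rw [ENNReal.toReal_mul] at hfalse
  norm_num at hfalse
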